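/- arXiv:2204.10567 — 2 statements merged into one kernel-verified Lean document; each statement's English description precedes it below -/
import Mathlib

section
/- Let G be a group acting transitively on a finite nonempty set R, and let H be a normal subgroup of G of finite index such that the index (G:H) is coprime to the cardinality of R. Then H acts transitively on R. -/
open scoped Pointwise
theorem stmt_1 {G R : Type*} [Group G] [MulAction G R] [Finite R] [Nonempty R]
    [MulAction.IsPretransitive G R] (H : Subgroup G) [H.Normal] [H.FiniteIndex]
    (hcop : Nat.Coprime H.index (Nat.card R)) :
    MulAction.IsPretransitive H R := by
  obtain ⟨a⟩ := ‹Nonempty R›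
  set B : Set R := MulAction.orbit H a with hBdef
  have hB : MulAction.IsBlock G B := MulAction.IsBlock.orbit_of_normal a
  have hBne : B.Nonempty := ⟨a, MulAction.mem_orbit_self a⟩
  have hkey := hB.ncard_block_mul_ncard_orbit_eq hBne
  have hle : H ≤ MulAction.stabilizer G B := by
    intro h hh
    rw [MulAction.mem_stabilizer_iff, hBdef, MulAction.smul_orbit_eq_orbit_smul,
      MulAction.orbit_eq_iff]
    exact MulAction.mem_orbit a (⟨h, hh⟩ : H)
  have hd1 : (MulAction.orbit G B).ncard ∣ H.index := by
    rw [← MulAction.index_stabilizer]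
    exact Subgroup.index_dvd_of_le hle
  have hd2 : (MulAction.orbit G B).ncard ∣ Nat.card R := Dvd.intro_left _ hkey
  have h1 : (MulAction.orbit G B).ncard = 1 :=
    Nat.eq_one_of_dvd_coprimes hcop hd1 hd2
  have hBcard : B.ncard = Nat.card R := by
    rw [← hkey, h1, mul_one]
  have hBuniv : B = Set.univ :=
    Set.eq_of_subset_of_ncard_le (Set.subset_univ B)
      (by rw [Set.ncard_univ, hBcard]) (Set.finite_univ)
  constructor
  intro x y
  have hx : x ∈ MulAction.orbit H a := by rw [← hBdef, hBuniv]; trivial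
  have hy : y ∈ MulAction.orbit H a := by rw [← hBdef, hBuniv]; trivial
  rw [← MulAction.orbit_eq_iff.mpr hx] at hy
  obtain ⟨h, hh⟩ := hy
  exact ⟨h, hh⟩
end

section
/- Let K be a field, f(x) ∈ K[x] an irreducible separable polynomial of degree n, and K₁/K a finite Galois extension whose degree [K₁:K] is coprime to n. Then f(x) remains irreducible over K₁. -/
open Polynomial IntermediateField Module

theorem stmt_3 {K K₁ : Type*} [Field K] [Field K₁] [Algebra K K₁]
    [FiniteDimensional K K₁] [IsGalois K K₁] {f : Polynomial K}
    (hf : Irreducible f) (hsep : f.Separable)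
    (hcop : Nat.Coprime (Module.finrank K K₁) f.natDegree) :
    Irreducible (f.map (algebraMap K K₁)) := by
  classical
  have hf0 : f ≠ 0 := hf.ne_zero
  set Ω := AlgebraicClosure K₁
  -- find a root of f in Ω
  obtain ⟨α, hα⟩ : ∃ α : Ω, (Polynomial.aeval α) f = 0 := by
    obtain ⟨α, hα⟩ := IsAlgClosed.exists_root (p := f.map (algebraMap K Ω)) (by
      rw [Polynomial.degree_map]
      exact (Polynomial.degree_pos_of_irreducible hf).ne')
    exact ⟨α, by rwa [Polynomial.aeval_def, ← Polynomial.eval_map]⟩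
  have hintK : IsIntegral K α := IsAlgebraic.isIntegral ⟨f, hf0, hα⟩
  have hint₁ : IsIntegral K₁ α := hintK.tower_top
  -- minpoly K α has degree n
  have hminK : (minpoly K α).natDegree = f.natDegree := by
    rw [← minpoly.eq_of_irreducible hf hα]
    simp [Polynomial.natDegree_mul hf0 (by
      simp [Polynomial.leadingCoeff_ne_zero.mpr hf0] : (Polynomial.C f.leadingCoeff⁻¹) ≠ 0)]
  set g := minpoly K₁ α with hg
  have hgdvd : g ∣ f.map (algebraMap K K₁) :=
    minpoly.dvd K₁ α (by rwa [Polynomial.aeval_map_algebraMap])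
  haveI : FiniteDimensional K₁ K₁⟮α⟯ := IntermediateField.adjoin.finiteDimensional hint₁
  haveI : FiniteDimensional K K₁⟮α⟯ := FiniteDimensional.trans K K₁ K₁⟮α⟯
  have hαmem : α ∈ K₁⟮α⟯ := IntermediateField.mem_adjoin_simple_self K₁ α
  -- n divides [K₁⟮α⟯ : K]
  have hdvd1 : f.natDegree ∣ finrank K K₁⟮α⟯ := by
    haveI : IsScalarTower K (K₁⟮α⟯) Ω := IsScalarTower.of_algebraMap_eq fun x => rfl
    have heq : minpoly K (⟨α, hαmem⟩ : K₁⟮α⟯) = minpoly K α := by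
      rw [← minpoly.algebraMap_eq (algebraMap K₁⟮α⟯ Ω).injective (⟨α, hαmem⟩ : K₁⟮α⟯)]
      rfl
    have := minpoly.degree_dvd (x := (⟨α, hαmem⟩ : K₁⟮α⟯)) (IsIntegral.of_finite K _)
    rwa [heq, hminK] at this
  have htower : finrank K K₁⟮α⟯ = finrank K K₁ * g.natDegree := by
    rw [← IntermediateField.adjoin.finrank hint₁]
    exact (Module.finrank_mul_finrank K K₁ K₁⟮α⟯).symm
  have hfm0 : f.map (algebraMap K K₁) ≠ 0 :=
    (Polynomial.map_ne_zero_iff (algebraMap K K₁).injective).mpr hf0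
  have hle : g.natDegree ≤ f.natDegree := by
    have := Polynomial.natDegree_le_of_dvd hgdvd hfm0
    rwa [Polynomial.natDegree_map] at this
  have hdvd2 : f.natDegree ∣ g.natDegree := by
    have h1 : f.natDegree ∣ finrank K K₁ * g.natDegree := htower ▸ hdvd1
    exact Nat.Coprime.dvd_of_dvd_mul_left hcop.symm h1
  have hg0 : g ≠ 0 := minpoly.ne_zero hint₁
  have hdeg : g.natDegree = (f.map (algebraMap K K₁)).natDegree := by
    rw [Polynomial.natDegree_map]
    exact le_antisymm hle (Nat.le_of_dvd (minpoly.natDegree_pos hint₁) hdvd2)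
  -- conclude: f.map is associated to the irreducible g
  obtain ⟨q, hq⟩ := hgdvd
  have hq0 : q ≠ 0 := fun h => hfm0 (by simp [hq, h])
  have hqdeg : q.natDegree = 0 := by
    have := hdeg
    rw [hq, Polynomial.natDegree_mul hg0 hq0] at this
    omega
  obtain ⟨c, rfl⟩ := Polynomial.natDegree_eq_zero.mp hqdeg
  have hc : IsUnit (Polynomial.C c) :=
    Polynomial.isUnit_C.mpr (isUnit_iff_ne_zero.mpr (fun h => hq0 (by simp [h])))
  exact Associated.irreducible ⟨hc.unit, hq.symm⟩ (minpoly.irreducible hint₁)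
end
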